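/- arXiv:2112.14204 — 2 statements merged into one kernel-verified Lean document; each statement's English description precedes it below -/
import Mathlib

section
/- Let Z ∈ ℝ^{Kd×Kd} be viewed as a K×K array of d×d blocks Z_{ij}. Suppose that for every i ∈ [K]: (a) Σ_{j=1}^K ‖Z_{ij}‖_F ≤ √d; (b) every singular value of Z_{ii} lies in [0,1]; and (c) tr(Z_{ii}) equals the sum of the singular values of Z_{ii}. Then ‖Z − I_{Kd}‖_F² ≤ (1 + 1/d)·(Kd − tr(Z))². -/
open Matrix BigOperators Finset

/-- Frobenius norm of a real matrix. -/
noncomputable def frobNorm {a b : Type*} [Fintype a] [Fintype b]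
    (X : Matrix a b ℝ) : ℝ :=
  Real.sqrt (∑ i, ∑ j, X i j ^ 2)

/-- `Q` belongs to the real orthogonal group `O(d)`. -/
def IsOrthoMat {d : ℕ} (Q : Matrix (Fin d) (Fin d) ℝ) : Prop :=
  Q * Qᵀ = 1 ∧ Qᵀ * Q = 1

/-- `Q` belongs to the special orthogonal group `SO(d)`. -/
def IsSpecOrthoMat {d : ℕ} (Q : Matrix (Fin d) (Fin d) ℝ) : Prop :=
  IsOrthoMat Q ∧ Q.det = 1

/-- The `(i,j)`-th `d × d` block of a block matrix. -/
def blockOf {n K d : ℕ} (X : Matrix (Fin n × Fin d) (Fin K × Fin d) ℝ)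
    (i : Fin n) (j : Fin K) : Matrix (Fin d) (Fin d) ℝ :=
  fun a b => X (i, a) (j, b)

/-- The singular values of a real `d × d` matrix: square roots of the
eigenvalues of the Gram matrix `Xᴴ X`. -/
noncomputable def singVals {d : ℕ} (X : Matrix (Fin d) (Fin d) ℝ) : Fin d → ℝ :=
  fun k => Real.sqrt ((Matrix.isHermitian_conjTranspose_mul_self X).eigenvalues k)

/-- Nuclear norm: the sum of the singular values. -/
noncomputable def nuclearNorm {d : ℕ} (X : Matrix (Fin d) (Fin d) ℝ) : ℝ :=
  ∑ k, singVals X k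

/-- The map `μ` sending `X` to its `n × K` matrix of blockwise nuclear norms. -/
noncomputable def muMap {n K d : ℕ} (X : Matrix (Fin n × Fin d) (Fin K × Fin d) ℝ) :
    Matrix (Fin n) (Fin K) ℝ :=
  fun i j => nuclearNorm (blockOf X i j)

/-- `H` is a clustering matrix: 0/1 entries, each row sums to 1, each column sums to `m`. -/
def IsClusteringMatrix {n K : ℕ} (m : ℕ) (H : Matrix (Fin n) (Fin K) ℝ) : Prop :=
  (∀ i j, H i j = 0 ∨ H i j = 1) ∧ (∀ i, ∑ j, H i j = 1) ∧ (∀ j, ∑ i, H i j = (m : ℝ))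

/-- `V = (1_{1×K} ⊗ R) ⊙ (H ⊗ 1_{d×d})`: the `(i,j)`-th `d × d` block is `H i j • R i`. -/
def buildV {n K d : ℕ} (R : Fin n → Matrix (Fin d) (Fin d) ℝ)
    (H : Matrix (Fin n) (Fin K) ℝ) : Matrix (Fin n × Fin d) (Fin K × Fin d) ℝ :=
  fun p q => H p.1 q.1 * R p.1 p.2 q.2

/-- Membership in the set `F` (resp. `E` if `G = SO(d)`): `V` is built from
blocks `R i ∈ G` and a clustering matrix `H`. -/
def InFeas {n K d : ℕ} (m : ℕ) (G : Matrix (Fin d) (Fin d) ℝ → Prop)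
    (V : Matrix (Fin n × Fin d) (Fin K × Fin d) ℝ) : Prop :=
  ∃ (R : Fin n → Matrix (Fin d) (Fin d) ℝ) (H : Matrix (Fin n) (Fin K) ℝ),
    (∀ i, G (R i)) ∧ IsClusteringMatrix m H ∧ V = buildV R H

/-- Membership in `F`: blocks in `O(d)`. -/
def InF {n K d : ℕ} (m : ℕ) (V : Matrix (Fin n × Fin d) (Fin K × Fin d) ℝ) : Prop :=
  InFeas m IsOrthoMat V

/-- Membership in `P_K(G)`: `M = bdiag(U₁,…,U_K) (P ⊗ I_d)` with `U_k ∈ G`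
and `P` a permutation matrix, i.e. the `(a,b)` block of `M` is `U a` if `a = π b`, else `0`. -/
def InPK {K d : ℕ} (G : Matrix (Fin d) (Fin d) ℝ → Prop)
    (M : Matrix (Fin K × Fin d) (Fin K × Fin d) ℝ) : Prop :=
  ∃ (U : Fin K → Matrix (Fin d) (Fin d) ℝ) (π : Equiv.Perm (Fin K)),
    (∀ k, G (U k)) ∧ ∀ p q, M p q = if p.1 = π q.1 then U p.1 p.2 q.2 else 0

/-- `dist_G(V₁,V₂) = min_{Q ∈ P_K(G)} ‖V₁ - V₂ Q‖_F` (the minimum is attained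
since `P_K(G)` is compact; we express it as an infimum). -/
noncomputable def distG {n K d : ℕ} (G : Matrix (Fin d) (Fin d) ℝ → Prop)
    (V₁ V₂ : Matrix (Fin n × Fin d) (Fin K × Fin d) ℝ) : ℝ :=
  sInf {r | ∃ Q, InPK G Q ∧ r = frobNorm (V₁ - V₂ * Q)}

/-- Estimation error `ε_G(V)` with respect to a ground truth `Vstar`. -/
noncomputable def epsG {n K d : ℕ} (G : Matrix (Fin d) (Fin d) ℝ → Prop)
    (Vstar V : Matrix (Fin n × Fin d) (Fin K × Fin d) ℝ) : ℝ :=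
  distG G V Vstar

lemma trace_eq_sum_eig {n : Type*} [Fintype n] [DecidableEq n]
    {A : Matrix n n ℝ} (hA : A.IsHermitian) :
    A.trace = ∑ i, hA.eigenvalues i := by
  simpa using hA.trace_eq_sum_eigenvalues

lemma sum_eig_sq {d : ℕ} (X : Matrix (Fin d) (Fin d) ℝ) :
    ∑ k, (Matrix.isHermitian_conjTranspose_mul_self X).eigenvalues k = ∑ a, ∑ b, X a b ^ 2 := by
  rw [← trace_eq_sum_eig]
  simp only [Matrix.trace, Matrix.diag, Matrix.mul_apply, Matrix.conjTranspose_apply,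
    star_trivial, ← sq]
  exact Finset.sum_comm

lemma sum_sq_le_sq_sum {ι : Type*} (s : Finset ι) (f : ι → ℝ) (hf : ∀ i ∈ s, 0 ≤ f i) :
    ∑ i ∈ s, f i ^ 2 ≤ (∑ i ∈ s, f i) ^ 2 := by
  have h : ∀ i ∈ s, f i ^ 2 ≤ f i * ∑ j ∈ s, f j := by
    intro i hi
    rw [sq]
    exact mul_le_mul_of_nonneg_left (Finset.single_le_sum hf hi) (hf i hi)
  calc ∑ i ∈ s, f i ^ 2 ≤ ∑ i ∈ s, f i * ∑ j ∈ s, f j := Finset.sum_le_sum h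
    _ = (∑ i ∈ s, f i) ^ 2 := by rw [← Finset.sum_mul, sq]

/-- if every block row of `Z` satisfies `∑_j ‖Z_{ij}‖_F ≤ √d`,
every singular value of each diagonal block lies in `[0,1]`, and the trace of
each diagonal block equals the sum of its singular values, then
`‖Z - I‖_F² ≤ (1 + 1/d) (Kd - tr Z)²`. -/
theorem stmt12 {K d : ℕ} (Z : Matrix (Fin K × Fin d) (Fin K × Fin d) ℝ)
    (ha : ∀ i, ∑ j, frobNorm (blockOf Z i j) ≤ Real.sqrt d)
    (hb : ∀ i k, singVals (blockOf Z i i) k ∈ Set.Icc (0 : ℝ) 1)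
    (hc : ∀ i, (blockOf Z i i).trace = ∑ k, singVals (blockOf Z i i) k) :
    frobNorm (Z - 1) ^ 2 ≤ (1 + 1/(d : ℝ)) * ((K * d : ℝ) - Z.trace) ^ 2 := by
  classical
  rcases Nat.eq_zero_or_pos d with hd0 | hdpos
  · subst hd0
    simp [frobNorm, Matrix.trace]
  have hd : (0:ℝ) < d := by exact_mod_cast hdpos
  have hsd : (0:ℝ) < Real.sqrt d := Real.sqrt_pos.mpr hd
  have hdd : Real.sqrt d * Real.sqrt d = d := Real.mul_self_sqrt hd.le
  set σ : Fin K → Fin d → ℝ := fun i k => singVals (blockOf Z i i) k with hσdef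
  set t : Fin K → ℝ := fun i => ∑ k, (1 - σ i k) with htdef
  have hσ0 : ∀ i k, 0 ≤ σ i k := fun i k => (hb i k).1
  have hσ1 : ∀ i k, σ i k ≤ 1 := fun i k => (hb i k).2
  have ht0 : ∀ i, 0 ≤ t i := fun i =>
    Finset.sum_nonneg fun k _ => by linarith [hσ1 i k]
  have hFsq : ∀ (i j : Fin K), frobNorm (blockOf Z i j) ^ 2
      = ∑ a, ∑ b, (Z (i,a) (j,b)) ^ 2 := by
    intro i j
    unfold frobNorm
    rw [Real.sq_sqrt (by positivity)]
    rfl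
  have hF0 : ∀ i j, 0 ≤ frobNorm (blockOf Z i j) := fun i j => Real.sqrt_nonneg _
  have hdiag_sq : ∀ i, ∑ k, σ i k ^ 2 = frobNorm (blockOf Z i i) ^ 2 := by
    intro i
    rw [hFsq]
    calc ∑ k, σ i k ^ 2
        = ∑ k, (Matrix.isHermitian_conjTranspose_mul_self (blockOf Z i i)).eigenvalues k :=
          Finset.sum_congr rfl fun k _ =>
            Real.sq_sqrt (Matrix.eigenvalues_conjTranspose_mul_self_nonneg _ k)
      _ = ∑ a, ∑ b, (blockOf Z i i) a b ^ 2 := sum_eig_sq _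
      _ = ∑ a, ∑ b, (Z (i,a) (i,b)) ^ 2 := rfl
  have htr : ∀ i, ∑ a, Z (i,a) (i,a) = ∑ k, σ i k := fun i => hc i
  have ht_eq : ∀ i, t i = (d : ℝ) - ∑ k, σ i k := by
    intro i
    rw [htdef]
    simp [Finset.sum_sub_distrib, Finset.card_univ]
  -- diagonal block deviation
  have hdiag : ∀ i, ∑ a, ∑ b, ((Z - 1) ((i,a) : Fin K × Fin d) (i,b)) ^ 2
      = ∑ k, (1 - σ i k) ^ 2 := by
    intro i
    have hexp : ∀ a b : Fin d, ((Z - 1) ((i,a) : Fin K × Fin d) (i,b)) ^ 2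
        = Z (i,a) (i,b) ^ 2 - (if a = b then (2:ℝ) * Z (i,a) (i,b) else 0)
          + (if a = b then (1:ℝ) else 0) := by
      intro a b
      have h1 : (1 : Matrix (Fin K × Fin d) (Fin K × Fin d) ℝ) (i,a) (i,b)
          = if a = b then 1 else 0 := by
        simp [Matrix.one_apply, Prod.ext_iff]
      rw [Matrix.sub_apply, h1]
      by_cases h : a = b <;> simp [h] <;> ring
    calc ∑ a, ∑ b, ((Z - 1) ((i,a) : Fin K × Fin d) (i,b)) ^ 2
        = ∑ a, ∑ b, (Z (i,a) (i,b) ^ 2 - (if a = b then (2:ℝ) * Z (i,a) (i,b) else 0)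
            + (if a = b then (1:ℝ) else 0)) :=
          Finset.sum_congr rfl fun a _ => Finset.sum_congr rfl fun b _ => hexp a b
      _ = (∑ a, ∑ b, Z (i,a) (i,b) ^ 2) - 2 * (∑ a, Z (i,a) (i,a)) + d := by
          simp only [Finset.sum_add_distrib, Finset.sum_sub_distrib,
            Finset.sum_ite_eq, Finset.mem_univ, if_true, Finset.sum_const,
            Finset.card_univ, Fintype.card_fin, nsmul_eq_mul, mul_one, Finset.mul_sum]
      _ = (∑ k, σ i k ^ 2) - 2 * (∑ k, σ i k) + d := by rw [hdiag_sq, hFsq, htr]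
      _ = ∑ k, (1 - σ i k) ^ 2 := by
          have : ∀ k : Fin d, (1 - σ i k) ^ 2 = 1 - 2 * σ i k + σ i k ^ 2 := fun k => by ring
          simp only [this, Finset.sum_add_distrib, Finset.sum_sub_distrib,
            Finset.sum_const, Finset.card_univ, Fintype.card_fin, nsmul_eq_mul, mul_one,
            Finset.mul_sum]
          ring
  -- per-row bound
  have hi_bound : ∀ i, ∑ j, ∑ a, ∑ b, ((Z - 1) ((i,a) : Fin K × Fin d) (j,b)) ^ 2
      ≤ (1 + 1/(d:ℝ)) * t i ^ 2 := by
    intro i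
    rw [Fintype.sum_eq_add_sum_compl i]
    have hoff_eq : ∀ j ∈ ({i}ᶜ : Finset (Fin K)),
        ∑ a, ∑ b, ((Z - 1) ((i,a) : Fin K × Fin d) (j,b)) ^ 2
          = frobNorm (blockOf Z i j) ^ 2 := by
      intro j hj
      have hij : i ≠ j := by
        simpa [eq_comm] using Finset.mem_compl.mp hj
      rw [hFsq]
      refine Finset.sum_congr rfl fun a _ => Finset.sum_congr rfl fun b _ => ?_
      rw [Matrix.sub_apply, Matrix.one_apply_ne (ne_of_apply_ne Prod.fst hij), sub_zero]
    have hS0 : 0 ≤ ∑ j ∈ ({i}ᶜ : Finset (Fin K)), frobNorm (blockOf Z i j) :=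
      Finset.sum_nonneg fun j _ => hF0 i j
    have hsum : frobNorm (blockOf Z i i)
        + ∑ j ∈ ({i}ᶜ : Finset (Fin K)), frobNorm (blockOf Z i j) ≤ Real.sqrt d := by
      have h := Fintype.sum_eq_add_sum_compl i (fun j => frobNorm (blockOf Z i j))
      linarith [ha i, h]
    have hsig_le : ∑ k, σ i k ≤ Real.sqrt d * frobNorm (blockOf Z i i) := by
      have h1 : (∑ k, σ i k) ^ 2 ≤ (d : ℝ) * ∑ k, σ i k ^ 2 := by
        have := sq_sum_le_card_mul_sum_sq (s := (Finset.univ : Finset (Fin d))) (f := σ i)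
        simpa using this
      have h2 : (∑ k, σ i k) ^ 2 ≤ (Real.sqrt d * frobNorm (blockOf Z i i)) ^ 2 := by
        rw [mul_pow, Real.sq_sqrt hd.le, ← hdiag_sq]
        exact h1
      have h3 : 0 ≤ Real.sqrt d * frobNorm (blockOf Z i i) := mul_nonneg hsd.le (hF0 i i)
      nlinarith [Finset.sum_nonneg fun k (_ : k ∈ Finset.univ) => hσ0 i k]
    have hS_le : ∑ j ∈ ({i}ᶜ : Finset (Fin K)), frobNorm (blockOf Z i j)
        ≤ t i / Real.sqrt d := by
      have key : Real.sqrt d - frobNorm (blockOf Z i i) ≤ t i / Real.sqrt d := by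
        rw [ht_eq i, le_div_iff₀ hsd]
        nlinarith [hsig_le, hdd]
      linarith [hsum]
    have hoff_bound : ∑ j ∈ ({i}ᶜ : Finset (Fin K)), frobNorm (blockOf Z i j) ^ 2
        ≤ t i ^ 2 / d := by
      calc ∑ j ∈ ({i}ᶜ : Finset (Fin K)), frobNorm (blockOf Z i j) ^ 2
          ≤ (∑ j ∈ ({i}ᶜ : Finset (Fin K)), frobNorm (blockOf Z i j)) ^ 2 :=
            sum_sq_le_sq_sum _ _ fun j _ => hF0 i j
        _ ≤ (t i / Real.sqrt d) ^ 2 := pow_le_pow_left₀ hS0 hS_le 2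
        _ = t i ^ 2 / d := by rw [div_pow, Real.sq_sqrt hd.le]
    have hdiag_bound : ∑ a, ∑ b, ((Z - 1) ((i,a) : Fin K × Fin d) (i,b)) ^ 2 ≤ t i ^ 2 := by
      rw [hdiag i, htdef]
      exact sum_sq_le_sq_sum _ _ fun k _ => by linarith [hσ1 i k]
    have : ∑ j ∈ ({i}ᶜ : Finset (Fin K)), ∑ a, ∑ b,
        ((Z - 1) ((i,a) : Fin K × Fin d) (j,b)) ^ 2 ≤ t i ^ 2 / d := by
      rw [Finset.sum_congr rfl hoff_eq]
      exact hoff_bound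
    have hsplit : (1 + 1/(d:ℝ)) * t i ^ 2 = t i ^ 2 + t i ^ 2 / d := by ring
    rw [hsplit]
    linarith
  -- assemble
  have hL : frobNorm (Z - 1) ^ 2
      = ∑ i, ∑ j, ∑ a, ∑ b, ((Z - 1) ((i,a) : Fin K × Fin d) (j,b)) ^ 2 := by
    unfold frobNorm
    rw [Real.sq_sqrt (by positivity)]
    rw [Fintype.sum_prod_type]
    refine Finset.sum_congr rfl fun i _ => ?_
    rw [Finset.sum_comm]
    rw [Fintype.sum_prod_type]
    exact Finset.sum_congr rfl fun j _ => Finset.sum_comm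
  have htrace : Z.trace = ∑ i, ∑ k, σ i k := by
    rw [Matrix.trace, Fintype.sum_prod_type]
    exact Finset.sum_congr rfl fun i _ => htr i
  have hsum_t : ∑ i, t i = (K * d : ℝ) - Z.trace := by
    rw [htrace]
    have : ∀ i : Fin K, t i = (d : ℝ) - ∑ k, σ i k := ht_eq
    simp only [this, Finset.sum_sub_distrib, Finset.sum_const, Finset.card_univ,
      Fintype.card_fin, nsmul_eq_mul]
  rw [hL, ← hsum_t]
  calc ∑ i, ∑ j, ∑ a, ∑ b, ((Z - 1) ((i,a) : Fin K × Fin d) (j,b)) ^ 2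
      ≤ ∑ i, (1 + 1/(d:ℝ)) * t i ^ 2 := Finset.sum_le_sum fun i _ => hi_bound i
    _ = (1 + 1/(d:ℝ)) * ∑ i, t i ^ 2 := by rw [Finset.mul_sum]
    _ ≤ (1 + 1/(d:ℝ)) * (∑ i, t i) ^ 2 := by
        apply mul_le_mul_of_nonneg_left (sum_sq_le_sq_sum _ _ fun i _ => ht0 i)
        positivity
end

section
/- Let V ∈ F have clustering matrix H and let V* ∈ E have clustering matrix H*. If H ≠ H*·P for every K×K permutation matrix P (i.e., the clustering of V does not agree with that of V* up to relabeling of clusters), then for every Q ∈ P_K(O(d)) one has ‖V − V*·Q‖_F ≥ √(2d); in particular ε_{O(d)}(V) ≥ √(2d) ≥ √2. -/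
open Matrix BigOperators Finset

lemma frob_sq_ortho {d : ℕ} {A : Matrix (Fin d) (Fin d) ℝ} (h : A * Aᵀ = 1) :
    ∑ a, ∑ b, A a b ^ 2 = (d : ℝ) := by
  have h1 : ∀ a, ∑ b, A a b ^ 2 = (A * Aᵀ) a a := by
    intro a
    simp [Matrix.mul_apply, Matrix.transpose_apply, sq]
  simp [h1, h, Matrix.one_apply]

lemma ortho_mul {d : ℕ} {A B : Matrix (Fin d) (Fin d) ℝ}
    (hA : IsOrthoMat A) (hB : IsOrthoMat B) : IsOrthoMat (A * B) := by
  constructor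
  · rw [Matrix.transpose_mul, Matrix.mul_assoc, ← Matrix.mul_assoc B, hB.1,
      Matrix.one_mul, hA.1]
  · rw [Matrix.transpose_mul, Matrix.mul_assoc, ← Matrix.mul_assoc Aᵀ, hA.2,
      Matrix.one_mul, hB.2]

lemma rowOne {K : ℕ} (f : Fin K → ℝ) (h01 : ∀ j, f j = 0 ∨ f j = 1)
    (hsum : ∑ j, f j = 1) : ∃ j, f j = 1 ∧ ∀ j', j' ≠ j → f j' = 0 := by
  have hnn : ∀ j, 0 ≤ f j := fun j => by rcases h01 j with h | h <;> simp [h]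
  obtain ⟨j, hj⟩ : ∃ j, f j = 1 := by
    by_contra h
    push_neg at h
    have h0 : ∀ j, f j = 0 := fun j => (h01 j).resolve_right (h j)
    simp [h0] at hsum
  refine ⟨j, hj, fun j' hj' => ?_⟩
  by_contra h
  have hj'1 : f j' = 1 := (h01 j').resolve_left h
  have h2 : ∑ x ∈ ({j', j} : Finset (Fin K)), f x ≤ ∑ x, f x :=
    Finset.sum_le_sum_of_subset_of_nonneg (Finset.subset_univ _) (fun i _ _ => hnn i)
  rw [Finset.sum_pair hj', hj'1, hj, hsum] at h2
  linarith

/-- if the clustering matrix `H` of `V ∈ F` does not agree with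
the clustering matrix `H*` of the ground truth `V* ∈ E` up to a relabeling of
clusters, then `‖V - V* Q‖_F ≥ √(2d)` for every `Q ∈ P_K(O(d))`; in particular
`ε_{O(d)}(V) ≥ √(2d) ≥ √2`. -/
theorem stmt17 {n K d m : ℕ} (hd : 0 < d)
    (G : Matrix (Fin d) (Fin d) ℝ → Prop)
    (hG : G = (IsOrthoMat (d := d)) ∨ G = (IsSpecOrthoMat (d := d)))
    (R Rs : Fin n → Matrix (Fin d) (Fin d) ℝ)
    (H Hs : Matrix (Fin n) (Fin K) ℝ)
    (hR : ∀ i, IsOrthoMat (R i)) (hH : IsClusteringMatrix m H)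
    (hRs : ∀ i, G (Rs i)) (hHs : IsClusteringMatrix m Hs)
    (hmismatch : ∀ σ : Equiv.Perm (Fin K), H ≠ fun i j => Hs i (σ j)) :
    (∀ Q, InPK IsOrthoMat Q →
      Real.sqrt (2 * d) ≤ frobNorm (buildV R H - buildV Rs Hs * Q)) ∧
    Real.sqrt (2 * d) ≤ epsG IsOrthoMat (buildV Rs Hs) (buildV R H) ∧
    Real.sqrt 2 ≤ Real.sqrt (2 * d) := by
  classical
  -- `Rs i` is orthogonal in either case
  have hRsO : ∀ i, IsOrthoMat (Rs i) := by
    rcases hG with rfl | rfl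
    · exact hRs
    · exact fun i => (hRs i).1
  have key : ∀ Q, InPK IsOrthoMat Q →
      Real.sqrt (2 * d) ≤ frobNorm (buildV R H - buildV Rs Hs * Q) := by
    intro Q hQmem
    obtain ⟨U, π, hU, hQ⟩ := hQmem
    -- entrywise description of the difference
    set D := buildV R H - buildV Rs Hs * Q with hDdef
    have hD : ∀ (i : Fin n) (a : Fin d) (j : Fin K) (b : Fin d),
        D (i, a) (j, b) = H i j * R i a b - Hs i (π j) * (Rs i * U (π j)) a b := by
      intro i a j b
      have hmul : (buildV Rs Hs * Q) (i, a) (j, b)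
          = Hs i (π j) * (Rs i * U (π j)) a b := by
        rw [Matrix.mul_apply, Fintype.sum_prod_type]
        have hterm : ∀ k : Fin K, ∑ c : Fin d,
            buildV Rs Hs (i, a) (k, c) * Q (k, c) (j, b)
            = if k = π j then Hs i k * ∑ c, Rs i a c * U k c b else 0 := by
          intro k
          by_cases hk : k = π j
          · simp [buildV, hQ, hk, Finset.mul_sum, mul_assoc]
          · simp [buildV, hQ, hk]
        rw [Finset.sum_congr rfl (fun k _ => hterm k), Finset.sum_ite_eq']
        simp [Matrix.mul_apply]
      simp [hDdef, Matrix.sub_apply, buildV, hmul]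
    -- find a mismatched row
    have hex : ∃ i j, H i j ≠ Hs i (π j) := by
      by_contra h
      push_neg at h
      exact hmismatch π (by funext i j; exact h i j)
    obtain ⟨i0, j0, hij0⟩ := hex
    obtain ⟨j1, hj1, hj1'⟩ := rowOne (fun j => H i0 j) (fun j => hH.1 i0 j) (hH.2.1 i0)
    have hsum2 : ∑ j, Hs i0 (π j) = 1 := by
      rw [Equiv.sum_comp π (fun j => Hs i0 j)]
      exact hHs.2.1 i0
    obtain ⟨j2, hj2, hj2'⟩ := rowOne (fun j => Hs i0 (π j)) (fun j => hHs.1 i0 (π j)) hsum2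
    have hne : j1 ≠ j2 := by
      intro h
      subst h
      by_cases hj : j0 = j1
      · exact hij0 (by rw [hj, hj1, hj2])
      · exact hij0 (by rw [hj1' j0 hj, hj2' j0 hj])
    -- block sums
    have T : Fin n → Fin K → ℝ := fun i j => ∑ a, ∑ b, D (i, a) (j, b) ^ 2
    have hT1 : (∑ a, ∑ b, D (i0, a) (j1, b) ^ 2) = (d : ℝ) := by
      have : ∀ a b, D (i0, a) (j1, b) = R i0 a b := by
        intro a b
        rw [hD, hj1, hj2' j1 hne]
        ring
      simp only [this]
      exact frob_sq_ortho (hR i0).1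
    have hT2 : (∑ a, ∑ b, D (i0, a) (j2, b) ^ 2) = (d : ℝ) := by
      have : ∀ a b, D (i0, a) (j2, b) = -((Rs i0 * U (π j2)) a b) := by
        intro a b
        rw [hD, hj2, hj1' j2 (Ne.symm hne)]
        ring
      simp only [this, neg_sq]
      exact frob_sq_ortho (ortho_mul (hRsO i0) (hU (π j2))).1
    have hsumsq : (2 * d : ℝ) ≤ ∑ p, ∑ q, D p q ^ 2 := by
      have hnn : ∀ (i : Fin n) (j : Fin K), 0 ≤ ∑ a, ∑ b, D (i, a) (j, b) ^ 2 :=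
        fun i j => Finset.sum_nonneg fun a _ => Finset.sum_nonneg fun b _ => sq_nonneg _
      have hrw : (∑ p : Fin n × Fin d, ∑ q : Fin K × Fin d, D p q ^ 2)
          = ∑ i : Fin n, ∑ j : Fin K, ∑ a, ∑ b, D (i, a) (j, b) ^ 2 := by
        rw [Fintype.sum_prod_type]
        refine Finset.sum_congr rfl fun i _ => ?_
        have hq : ∀ a : Fin d, (∑ q : Fin K × Fin d, D (i, a) q ^ 2)
            = ∑ j : Fin K, ∑ b : Fin d, D (i, a) (j, b) ^ 2 :=
          fun a => Fintype.sum_prod_type _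
        rw [Finset.sum_congr rfl fun a _ => hq a]
        exact Finset.sum_comm
      rw [hrw]
      have hrow : (2 * d : ℝ) ≤ ∑ j : Fin K, ∑ a, ∑ b, D (i0, a) (j, b) ^ 2 := by
        have hsub : ∑ j ∈ ({j1, j2} : Finset (Fin K)), ∑ a, ∑ b, D (i0, a) (j, b) ^ 2
            ≤ ∑ j : Fin K, ∑ a, ∑ b, D (i0, a) (j, b) ^ 2 :=
          Finset.sum_le_sum_of_subset_of_nonneg (Finset.subset_univ _)
            (fun j _ _ => hnn i0 j)
        rw [Finset.sum_pair hne, hT1, hT2] at hsub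
        linarith
      calc (2 * d : ℝ) ≤ ∑ j : Fin K, ∑ a, ∑ b, D (i0, a) (j, b) ^ 2 := hrow
        _ ≤ ∑ i : Fin n, ∑ j : Fin K, ∑ a, ∑ b, D (i, a) (j, b) ^ 2 :=
          Finset.single_le_sum (f := fun i => ∑ j : Fin K, ∑ a, ∑ b, D (i, a) (j, b) ^ 2)
            (fun i _ => Finset.sum_nonneg fun j _ => hnn i j) (Finset.mem_univ i0)
    have := Real.sqrt_le_sqrt hsumsq
    unfold frobNorm
    exact this
  refine ⟨key, ?_, ?_⟩
  · -- infimum bound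
    have hne : ∃ r, r ∈ {r | ∃ Q, InPK IsOrthoMat Q ∧
        r = frobNorm (buildV R H - buildV Rs Hs * Q)} := by
      refine ⟨_, ⟨fun p q => if p.1 = q.1 then (1 : Matrix (Fin d) (Fin d) ℝ) p.2 q.2 else 0,
        ⟨fun _ => (1 : Matrix (Fin d) (Fin d) ℝ), Equiv.refl _,
          fun k => ⟨by simp, by simp⟩, fun p q => rfl⟩, rfl⟩⟩
    exact le_csInf hne (by rintro r ⟨Q, hQ, rfl⟩; exact key Q hQ)
  · apply Real.sqrt_le_sqrt
    have : (1 : ℝ) ≤ d := by exact_mod_cast hd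
    linarith
end
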